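/- arXiv:1209.3530 — 3 statements merged into one kernel-verified Lean document; each statement's English description precedes it below -/
import Mathlib

section
/- Let A be a Banach algebra and let I be a left ideal of A such that the closure of I is finitely generated as a left ideal. Then I is closed in A. -/
noncomputable section

/-- A left ideal of an algebra `A`, encoded as a `ℂ`-submodule closed under
left multiplication by arbitrary elements of `A`. -/
def IsLeftIdeal {A : Type*} [NonUnitalNonAssocSemiring A] [Module ℂ A]
    (I : Submodule ℂ A) : Prop :=
  ∀ a : A, ∀ x ∈ I, a * x ∈ I

/-- The left ideal generated by a set `S` (equivalently `⟨S⟩ = A♯·S`). -/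
def leftIdealGen {A : Type*} [NonUnitalNonAssocSemiring A] [Module ℂ A]
    (S : Set A) : Submodule ℂ A :=
  sInf {I : Submodule ℂ A | IsLeftIdeal I ∧ S ⊆ ↑I}

/-- A left ideal is finitely generated if it is generated by a finite subset of itself. -/
def IsFGLeftIdeal {A : Type*} [NonUnitalNonAssocSemiring A] [Module ℂ A]
    (I : Submodule ℂ A) : Prop :=
  ∃ S : Finset A, ↑S ⊆ (I : Set A) ∧ leftIdealGen (↑S : Set A) = I

/-- A left ideal is countably generated if it is generated by a countable subset of itself. -/
def IsCGLeftIdeal {A : Type*} [NonUnitalNonAssocSemiring A] [Module ℂ A]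
    (I : Submodule ℂ A) : Prop :=
  ∃ S : Set A, S.Countable ∧ S ⊆ (I : Set A) ∧ leftIdealGen S = I

/-- Membership in `𝔐∞(A)`: a maximal element of the family of
non-finitely-generated left ideals. -/
def IsMaxNonFG {A : Type*} [NonUnitalNonAssocSemiring A] [Module ℂ A]
    (M : Submodule ℂ A) : Prop :=
  IsLeftIdeal M ∧ ¬ IsFGLeftIdeal M ∧
    ∀ J : Submodule ℂ A, IsLeftIdeal J → ¬ IsFGLeftIdeal J → M ≤ J → J = M

/-- Membership in `𝔑∞(A)`: a maximal element of the family of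
non-countably-generated left ideals. -/
def IsMaxNonCG {A : Type*} [NonUnitalNonAssocSemiring A] [Module ℂ A]
    (M : Submodule ℂ A) : Prop :=
  IsLeftIdeal M ∧ ¬ IsCGLeftIdeal M ∧
    ∀ J : Submodule ℂ A, IsLeftIdeal J → ¬ IsCGLeftIdeal J → M ≤ J → J = M

/-- `M` is a maximal left ideal. -/
def IsMaxLeftIdeal {A : Type*} [NonUnitalNonAssocSemiring A] [Module ℂ A]
    (M : Submodule ℂ A) : Prop :=
  IsLeftIdeal M ∧ M ≠ ⊤ ∧ ∀ J : Submodule ℂ A, IsLeftIdeal J → M < J → J = ⊤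

/-! ### Auxiliary material for the proof -/

namespace SinclairTullo

open Unitization Uniformity Filter

variable {A : Type*} [NonUnitalNormedRing A] [NormedSpace ℂ A]
  [IsScalarTower ℂ A A] [SMulCommClass ℂ A A]

/-- The ℓ¹ norm on the unitization. -/
def uAGN : AddGroupNorm (Unitization ℂ A) where
  toFun x := ‖x.fst‖ + ‖x.snd‖
  map_zero' := by simp
  add_le' x y := by
    simp only [fst_add, snd_add]
    calc ‖x.fst + y.fst‖ + ‖x.snd + y.snd‖
        ≤ (‖x.fst‖ + ‖y.fst‖) + (‖x.snd‖ + ‖y.snd‖) :=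
          add_le_add (norm_add_le _ _) (norm_add_le _ _)
      _ = _ := by ring
  neg' x := by simp
  eq_zero_of_map_eq_zero' x h := by
    have hsum : ‖x.fst‖ + ‖x.snd‖ = 0 := h
    have ha := norm_nonneg x.fst
    have hb := norm_nonneg x.snd
    have h1 : x.fst = 0 := by
      have : ‖x.fst‖ = 0 := by linarith
      simpa using this
    have h2 : x.snd = 0 := by
      have : ‖x.snd‖ = 0 := by linarith
      simpa using this
    rw [← x.inl_fst_add_inr_snd_eq, h1, h2]
    simp

def uNRAux : NormedRing (Unitization ℂ A) :=
  { AddGroupNorm.toNormedAddCommGroup uAGN,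
    (inferInstance : Ring (Unitization ℂ A)) with
    dist_eq := fun _ _ => rfl
    norm_mul_le := fun x y => by
      show ‖(x * y).fst‖ + ‖(x * y).snd‖ ≤ (‖x.fst‖ + ‖x.snd‖) * (‖y.fst‖ + ‖y.snd‖)
      rw [fst_mul, snd_mul]
      have h1 : ‖x.fst * y.fst‖ ≤ ‖x.fst‖ * ‖y.fst‖ := norm_mul_le _ _
      have h2 : ‖x.fst • y.snd‖ = ‖x.fst‖ * ‖y.snd‖ := norm_smul _ _
      have h3 : ‖y.fst • x.snd‖ = ‖y.fst‖ * ‖x.snd‖ := norm_smul _ _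
      have h4 : ‖x.snd * y.snd‖ ≤ ‖x.snd‖ * ‖y.snd‖ := norm_mul_le _ _
      have h5 : ‖x.fst • y.snd + y.fst • x.snd + x.snd * y.snd‖
          ≤ ‖x.fst • y.snd‖ + ‖y.fst • x.snd‖ + ‖x.snd * y.snd‖ := norm_add₃_le
      nlinarith [norm_nonneg x.snd, norm_nonneg y.snd] }

theorem uniformity_eq :
    𝓤 (Unitization ℂ A) = 𝓤[(uNRAux (A := A)).toMetricSpace.toUniformSpace] := by
  letI : NormedRing (Unitization ℂ A) := uNRAux
  have lip : LipschitzWith 1 (addEquiv ℂ A) := by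
    rw [← Real.toNNReal_one]
    refine AddMonoidHomClass.lipschitz_of_bound (addEquiv ℂ A) 1 fun x => ?_
    rw [one_mul, Prod.norm_def]
    exact max_le (le_add_of_nonneg_right (norm_nonneg _))
      (le_add_of_nonneg_left (norm_nonneg _))
  have antilip : AntilipschitzWith 2 (addEquiv ℂ A) := by
    refine AddMonoidHomClass.antilipschitz_of_bound (addEquiv ℂ A) fun x => ?_
    rw [Prod.norm_def, NNReal.coe_two]
    show ‖x.fst‖ + ‖x.snd‖ ≤ 2 * max ‖x.fst‖ ‖x.snd‖
    have := le_max_left ‖x.fst‖ ‖x.snd‖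
    have := le_max_right ‖x.fst‖ ‖x.snd‖
    linarith
  have key : @IsUniformInducing (Unitization ℂ A) (ℂ × A)
      (uNRAux (A := A)).toMetricSpace.toUniformSpace _ (addEquiv ℂ A) :=
    antilip.isUniformInducing lip.uniformContinuous
  rw [← @IsUniformInducing.comap_uniformity (Unitization ℂ A) (ℂ × A)
    ((uNRAux (A := A)).toMetricSpace.toUniformSpace) _ _ key]
  rfl

def uMetric : MetricSpace (Unitization ℂ A) :=
  (uNRAux (A := A)).toMetricSpace.replaceUniformity uniformity_eq

/-- The ℓ¹ normed ring structure on the unitization of a (possibly non-regular)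
non-unital Banach algebra, compatible with the canonical uniformity. -/
def uNormedRing : NormedRing (Unitization ℂ A) :=
  { uMetric, (uNRAux (A := A)) with }

attribute [local instance] uNormedRing

theorem uNorm_def (x : Unitization ℂ A) : ‖x‖ = ‖x.fst‖ + ‖x.snd‖ := rfl

theorem uComplete [CompleteSpace A] : CompleteSpace (Unitization ℂ A) := by
  have h : (uNormedRing (A := A)).toMetricSpace.toUniformSpace
      = (instUniformSpace : UniformSpace (Unitization ℂ A)) := rfl
  show @CompleteSpace (Unitization ℂ A) (uNormedRing (A := A)).toMetricSpace.toUniformSpace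
  rw [h]
  infer_instance

attribute [local instance] uComplete

theorem inr_sum' {ι : Type*} (s : Finset ι) (f : ι → A) :
    ((∑ i ∈ s, f i : A) : Unitization ℂ A) = ∑ i ∈ s, ((f i : Unitization ℂ A)) := by
  exact map_sum (inrHom ℂ ℂ A) f s

/-- Multiplying `inr x` on the left by any element of the unitization. -/
theorem mul_inr_eq (r : Unitization ℂ A) (x : A) :
    r * (x : Unitization ℂ A) = ((r.fst • x + r.snd * x : A) : Unitization ℂ A) := by
  conv_lhs => rw [← r.inl_fst_add_inr_snd_eq]
  rw [add_mul, inl_mul_inr, ← inr_mul, ← inr_add]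

section MatrixAux

variable {R : Type*} [NormedRing R] [CompleteSpace R] {ι : Type*} [Fintype ι] [DecidableEq ι]

attribute [local instance] Matrix.linftyOpNormedRing

local instance matrixComplete₀ : CompleteSpace (PiLp 1 fun _ : ι => R) :=
  inferInstance

local instance matrixComplete :
    @CompleteSpace (Matrix ι ι R) (Matrix.linftyOpNormedRing (n := ι) (α := R)).toUniformSpace :=
  (inferInstanceAs (CompleteSpace (ι → ι → R)))

theorem matnorm_le (B : Matrix ι ι R) (r : ℝ) (hr : 0 ≤ r) (h : ∀ i j, ‖B i j‖ ≤ r) :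
    ‖B‖ ≤ Fintype.card ι * r := by
  rw [Matrix.linfty_opNorm_def]
  have key : (Finset.univ.sup fun i : ι => ∑ j : ι, ‖B i j‖₊ : NNReal)
      ≤ Real.toNNReal (Fintype.card ι * r) := by
    refine Finset.sup_le fun i _ => ?_
    calc (∑ j : ι, ‖B i j‖₊) ≤ ∑ _j : ι, Real.toNNReal r :=
          Finset.sum_le_sum fun j _ => by
            rw [← norm_toNNReal]
            exact Real.toNNReal_mono (h i j)
      _ = Fintype.card ι • Real.toNNReal r := by
          rw [Finset.sum_const, Finset.card_univ]
      _ ≤ Real.toNNReal (Fintype.card ι * r) := by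
          rw [Real.toNNReal_mul (by positivity)]
          simp [nsmul_eq_mul]
  calc ((Finset.univ.sup fun i : ι => ∑ j : ι, ‖B i j‖₊ : NNReal) : ℝ)
      ≤ (Real.toNNReal (Fintype.card ι * r) : ℝ) := by exact_mod_cast key
    _ = Fintype.card ι * r := Real.coe_toNNReal _ (by positivity)

/-- Invertibility of `1 - B` for `‖B‖ < 1`, packaged for use below: a matrix `D`
with `D * (1 - B) = 1`. -/
theorem exists_left_inverse_one_sub (B : Matrix ι ι R) (h : ‖B‖ < 1) :
    ∃ D : Matrix ι ι R, D * (1 - B) = 1 :=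
  ⟨((Units.oneSub B h)⁻¹).val, (Units.oneSub B h).inv_mul⟩

end MatrixAux

/-! ### Generalities on left ideals -/

theorem leftIdealGen_isLeftIdeal (S : Set A) : IsLeftIdeal (leftIdealGen S) := by
  intro a x hx
  simp only [leftIdealGen, Submodule.mem_sInf] at hx ⊢
  intro p hp
  exact hp.1 a x (hx p hp)

theorem leftIdealGen_le {S : Set A} {I : Submodule ℂ A} (hI : IsLeftIdeal I)
    (h : S ⊆ (I : Set A)) : leftIdealGen S ≤ I :=
  sInf_le ⟨hI, h⟩

theorem isLeftIdeal_closure {I : Submodule ℂ A} (hI : IsLeftIdeal I) :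
    IsLeftIdeal I.topologicalClosure := by
  intro a x hx
  have hx' : x ∈ closure (I : Set A) := by
    rwa [← Submodule.topologicalClosure_coe, SetLike.mem_coe]
  have hc : Continuous fun y : A => a * y := continuous_const.mul continuous_id
  have := map_mem_closure hc hx' (fun y hy => hI a y hy)
  rwa [show a * x ∈ closure (I : Set A) ↔ a * x ∈ I.topologicalClosure by
    rw [← Submodule.topologicalClosure_coe, SetLike.mem_coe]] at this

end SinclairTullo

open SinclairTullo Unitization Matrix in
/-- Sinclair–Tullo / Dales, Proposition 2.6.37.
Let `A` be a Banach algebra and `I` a left ideal of `A` whose closure is finitely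
generated as a left ideal. Then `I` is closed in `A`. -/
theorem closure_fg_implies_closed {A : Type*} [NonUnitalNormedRing A] [NormedSpace ℂ A]
    [IsScalarTower ℂ A A] [SMulCommClass ℂ A A] [CompleteSpace A]
    (I : Submodule ℂ A) (hI : IsLeftIdeal I)
    (hfg : IsFGLeftIdeal I.topologicalClosure) :
    IsClosed (I : Set A) := by
  classical
  obtain ⟨S, hSJ, hgen⟩ := hfg
  set J := I.topologicalClosure with hJdef
  have hJclosed : IsClosed (J : Set A) := I.isClosed_topologicalClosure
  have hJleft : IsLeftIdeal J := isLeftIdeal_closure hI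
  haveI : CompleteSpace J := hJclosed.completeSpace_coe
  -- The continuous linear map `(f : S → ℂ × A) ↦ ∑ i, (f i).1 • i + (f i).2 * i`.
  set Tc : ↥S → ((ℂ × A) →L[ℂ] A) := fun i =>
    (((ContinuousLinearMap.smulRight (1 : ℂ →L[ℂ] ℂ) (i : A)).comp
        (ContinuousLinearMap.fst ℂ ℂ A)) +
      (((ContinuousLinearMap.mul ℂ A).flip (i : A)).comp
        (ContinuousLinearMap.snd ℂ ℂ A))) with hTcdef
  set T : (↥S → ℂ × A) →L[ℂ] A :=
    ∑ i : S, (Tc i).comp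
      (ContinuousLinearMap.proj (R := ℂ) (φ := fun _ : ↥S => ℂ × A) i) with hTdef
  have hT : ∀ f : ↥S → ℂ × A, T f = ∑ i : S, ((f i).1 • (i : A) + (f i).2 * (i : A)) := by
    intro f
    rw [hTdef]
    simp [ContinuousLinearMap.sum_apply, hTcdef]
  -- `T` maps into `J`
  have hTJ : ∀ f, T f ∈ J := by
    intro f
    rw [hT]
    refine Submodule.sum_mem _ fun i _ => Submodule.add_mem _ ?_ ?_
    · exact Submodule.smul_mem _ _ (hSJ i.2)
    · exact hJleft _ _ (hSJ i.2)
  -- the range of `T` is exactly `J`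
  have hrange : ∀ y ∈ J, ∃ f, T f = y := by
    intro y hy
    have h1 : IsLeftIdeal (LinearMap.range (T : (↥S → ℂ × A) →ₗ[ℂ] A)) := by
      intro b x hx
      obtain ⟨f, hf⟩ := hx
      refine ⟨fun i => (0, (f i).1 • b + b * (f i).2), ?_⟩
      show T _ = b * x
      rw [hT, ← hf]
      show _ = b * T f
      rw [hT, Finset.mul_sum]
      refine Finset.sum_congr rfl fun i _ => ?_
      simp only [zero_smul, zero_add, add_mul, mul_add, smul_mul_assoc, mul_smul_comm, mul_assoc]
    have h2 : (S : Set A) ⊆ (LinearMap.range (T : (↥S → ℂ × A) →ₗ[ℂ] A) : Set A) := by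
      intro a0 ha0
      refine ⟨Pi.single (⟨a0, ha0⟩ : S) ((1 : ℂ), (0 : A)), ?_⟩
      show T _ = a0
      rw [hT, Finset.sum_eq_single (⟨a0, ha0⟩ : S)]
      · simp
      · intro i _ hne
        rw [Pi.single_eq_of_ne hne]
        simp
      · intro h
        exact absurd (Finset.mem_univ _) h
    have h3 : J ≤ LinearMap.range (T : (↥S → ℂ × A) →ₗ[ℂ] A) := by
      rw [← hgen]
      exact leftIdealGen_le h1 h2
    obtain ⟨f, hf⟩ := h3 hy
    exact ⟨f, hf⟩
  -- open mapping theorem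
  set T₂ : (↥S → ℂ × A) →L[ℂ] J := T.codRestrict J hTJ with hT₂def
  have hsurj : Function.Surjective T₂ := by
    intro y
    obtain ⟨f, hf⟩ := hrange y.1 y.2
    exact ⟨f, Subtype.ext hf⟩
  obtain ⟨C, hCpos, hC⟩ := T₂.exists_preimage_norm_le hsurj
  -- choose approximations of the generators inside `I`
  set n : ℕ := Fintype.card S with hn
  set ε : ℝ := 1 / (2 * C * n + 1) with hε
  have hCn : (0 : ℝ) ≤ 2 * C * n := by positivity
  have hεpos : 0 < ε := by rw [hε]; positivity
  have happrox : ∀ i : S, ∃ c ∈ I, ‖(i : A) - c‖ < ε := by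
    intro i
    have hmem : (i : A) ∈ (J : Set A) := hSJ i.2
    rw [hJdef, Submodule.topologicalClosure_coe] at hmem
    rw [Metric.mem_closure_iff] at hmem
    obtain ⟨c, hcI, hc⟩ := hmem ε hεpos
    exact ⟨c, hcI, by rwa [← dist_eq_norm]⟩
  choose c hcI hcε using happrox
  -- write each `i - c i` via the generators with small coefficients
  have hdJ : ∀ i : S, (i : A) - c i ∈ J :=
    fun i => Submodule.sub_mem _ (hSJ i.2) (I.le_topologicalClosure (hcI i))
  have hg : ∀ i : S, ∃ g : ↥S → ℂ × A,
      T g = (i : A) - c i ∧ ‖g‖ ≤ C * ε := by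
    intro i
    obtain ⟨g, hg1, hg2⟩ := hC ⟨(i : A) - c i, hdJ i⟩
    refine ⟨g, ?_, ?_⟩
    · have := congrArg Subtype.val hg1
      exact this
    · refine hg2.trans ?_
      have : ‖(⟨(i : A) - c i, hdJ i⟩ : J)‖ = ‖(i : A) - c i‖ := rfl
      rw [this]
      exact mul_le_mul_of_nonneg_left (hcε i).le hCpos.le
  choose g hgT hgnorm using hg
  -- the matrix over the unitization
  letI : NormedRing (Unitization ℂ A) := uNormedRing
  haveI : @CompleteSpace (Unitization ℂ A) (uNormedRing (A := A)).toUniformSpace := uComplete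
  letI : NormedRing (Matrix ↥S ↥S (Unitization ℂ A)) :=
    Matrix.linftyOpNormedRing
  haveI : CompleteSpace (Matrix ↥S ↥S (Unitization ℂ A)) :=
    SinclairTullo.matrixComplete
  set B : Matrix ↥S ↥S (Unitization ℂ A) :=
    Matrix.of fun i j => (inl ((g i j).1) + ((g i j).2 : Unitization ℂ A)) with hB
  have hBnorm : ‖B‖ < 1 := by
    have hentry : ∀ i j, ‖B i j‖ ≤ 2 * (C * ε) := by
      intro i j
      have h1 : ‖B i j‖ = ‖(g i j).1‖ + ‖(g i j).2‖ := by
        rw [hB]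
        show ‖(inl ((g i j).1) + ((g i j).2 : Unitization ℂ A))‖ = _
        rw [uNorm_def]
        simp
      rw [h1]
      have h2 : ‖(g i j).1‖ ≤ ‖g i j‖ := norm_fst_le _
      have h3 : ‖(g i j).2‖ ≤ ‖g i j‖ := norm_snd_le _
      have h4 : ‖g i j‖ ≤ ‖g i‖ := norm_le_pi_norm (g i) j
      have h5 := hgnorm i
      linarith
    have := matnorm_le B (2 * (C * ε)) (by positivity) hentry
    refine this.trans_lt ?_
    rw [hε]
    rw [show (Fintype.card ↥S : ℝ) * (2 * (C * (1 / (2 * C * n + 1))))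
        = (2 * C * n) * (1 / (2 * C * n + 1)) by rw [hn]; ring]
    rw [mul_one_div, div_lt_one (by positivity)]
    linarith
  obtain ⟨D, hD⟩ := exists_left_inverse_one_sub B hBnorm
  -- the vector equation `(1 - B) *ᵥ v = w`
  set v : ↥S → Unitization ℂ A := fun j => ((j : A) : Unitization ℂ A) with hv
  set w : ↥S → Unitization ℂ A := fun j => ((c j : A) : Unitization ℂ A) with hw
  have hvec : (1 - B) *ᵥ v = w := by
    funext i
    rw [Matrix.sub_mulVec, Matrix.one_mulVec]
    have hBv : (B *ᵥ v) i = ((T (g i) : A) : Unitization ℂ A) := by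
      show ∑ j, B i j * v j = _
      rw [hT]
      rw [inr_sum']
      refine Finset.sum_congr rfl fun j _ => ?_
      rw [hv, hB]
      show (inl ((g i j).1) + ((g i j).2 : Unitization ℂ A)) * ((j : A) : Unitization ℂ A) = _
      rw [add_mul, inl_mul_inr, ← inr_mul, ← inr_add]
    show v i - (B *ᵥ v) i = w i
    rw [hBv, hgT, hv, hw]
    show ((i : A) : Unitization ℂ A) - (((i : A) - c i : A) : Unitization ℂ A) = _
    rw [inr_sub]
    exact sub_sub_cancel _ _
  have hvD : v = D *ᵥ w := by
    calc v = (D * (1 - B)) *ᵥ v := by rw [show D * (1 - B) = 1 from hD, Matrix.one_mulVec]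
      _ = D *ᵥ ((1 - B) *ᵥ v) := by rw [Matrix.mulVec_mulVec]
      _ = D *ᵥ w := by rw [hvec]
  -- conclude that every generator lies in `I`
  have hSsubI : (S : Set A) ⊆ (I : Set A) := by
    intro a0 ha0
    set i : ↥S := ⟨a0, ha0⟩
    have h1 : v i = ∑ j, D i j * w j := by rw [hvD]; rfl
    have h2 : ∑ j, D i j * w j
        = ((∑ j, ((D i j).fst • c j + (D i j).snd * c j) : A) : Unitization ℂ A) := by
      rw [inr_sum']
      exact Finset.sum_congr rfl fun j _ => mul_inr_eq _ _
    have h3 : (a0 : A) = ∑ j, ((D i j).fst • c j + (D i j).snd * c j) := by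
      apply inr_injective (R := ℂ)
      rw [← h2, ← h1, hv]
    rw [h3]
    exact Submodule.sum_mem _ fun j _ =>
      Submodule.add_mem _ (I.smul_mem _ (hcI j)) (hI _ _ (hcI j))
  -- finish
  have hJI : J ≤ I := by
    rw [← hgen]
    exact leftIdealGen_le hI hSsubI
  have hIJ : I = J := le_antisymm I.le_topologicalClosure hJI
  rw [show (I : Set A) = (J : Set A) by rw [hIJ]]
  exact hJclosed
end
end

section
/- Let A be a unital algebra with a two-sided ideal L such that A/L is isomorphic to the matrix algebra Mₙ(ℂ) for some n ∈ ℕ. Suppose that each maximal left ideal of A containing L is finitely generated as a left ideal of A. Then L is finitely generated as a left ideal of A. -/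
noncomputable section

section Aux

variable {A : Type*} [Ring A] [Algebra ℂ A]

lemma isLeftIdeal_leftIdealGen' (S : Set A) : IsLeftIdeal (leftIdealGen S) := by
  intro a x hx
  simp only [leftIdealGen, Submodule.mem_sInf, Set.mem_setOf_eq] at *
  intro I hI
  exact hI.1 a x (hx I hI)

lemma subset_leftIdealGen' (S : Set A) : S ⊆ ↑(leftIdealGen S) := by
  intro s hs
  simp only [leftIdealGen, SetLike.mem_coe, Submodule.mem_sInf, Set.mem_setOf_eq]
  intro I hI
  exact hI.2 hs

lemma leftIdealGen_le' {S : Set A} {I : Submodule ℂ A} (hI : IsLeftIdeal I)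
    (hS : S ⊆ ↑I) : leftIdealGen S ≤ I := sInf_le ⟨hI, hS⟩

lemma sum_stdBasisMatrix_eq_one' (n : ℕ) :
    (∑ j : Fin n, Matrix.single j j (1 : ℂ)) = 1 := by
  ext i k
  simp only [Matrix.sum_apply, Matrix.one_apply]
  rcases eq_or_ne i k with rfl | h
  · rw [Finset.sum_eq_single i]
    · simp
    · intro b _ hb; exact Matrix.single_apply_of_ne _ _ _ _ _ (by tauto)
    · simp
  · rw [if_neg h]
    refine Finset.sum_eq_zero fun b _ => Matrix.single_apply_of_ne _ _ _ _ _ ?_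
    rintro ⟨rfl, rfl⟩; exact h rfl

lemma std_mul_mul_std' {n : ℕ} (j k : Fin n) (M : Matrix (Fin n) (Fin n) ℂ) :
    Matrix.single j k 1 * M * Matrix.single j j 1 =
      Matrix.single j j (M k j) := by
  ext p q
  by_cases hq : q = j
  · subst hq
    by_cases hp : p = q
    · subst hp; simp
    · simp [hp, Ne.symm hp]
  · simp [hq, Ne.symm hq]

end Aux

/-- Lemma 1.7. Let `A` be a unital algebra with a two-sided ideal `L`
such that `A/L ≅ Mₙ(ℂ)` (encoded by a surjective algebra homomorphism `π` onto `Mₙ(ℂ)`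
with kernel `L`). If every maximal left ideal of `A` containing `L` is finitely
generated, then `L` is finitely generated as a left ideal of `A`. -/
theorem fg_of_matrix_quotient {A : Type*} [Ring A] [Algebra ℂ A] (n : ℕ) (hn : 0 < n)
    (L : Submodule ℂ A) (hL : IsLeftIdeal L) (hLr : ∀ x ∈ L, ∀ a : A, x * a ∈ L)
    (π : A →ₐ[ℂ] Matrix (Fin n) (Fin n) ℂ) (hsurj : Function.Surjective π)
    (hker : ∀ a : A, π a = 0 ↔ a ∈ L)
    (hmax : ∀ M : Submodule ℂ A, IsMaxLeftIdeal M → L ≤ M → IsFGLeftIdeal M) :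
    IsFGLeftIdeal L := by
  classical
  set E : Fin n → Matrix (Fin n) (Fin n) ℂ := fun j => Matrix.single j j 1 with hE
  choose e he using fun j : Fin n => hsurj (E j)
  set M : Fin n → Submodule ℂ A := fun j =>
    (LinearMap.ker (LinearMap.mulRight ℂ (E j))).comap π.toLinearMap with hM
  have hmemM : ∀ (j) (a : A), a ∈ M j ↔ π a * E j = 0 := by
    intro j a
    simp [hM, LinearMap.mem_ker]
  have hLM : ∀ j, L ≤ M j := by
    intro j x hx
    rw [hmemM, (hker x).mpr hx, zero_mul]
  have hMleft : ∀ j, IsLeftIdeal (M j) := by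
    intro j a x hx
    rw [hmemM] at hx ⊢
    rw [map_mul, mul_assoc, hx, mul_zero]
  have hMmax : ∀ j, IsMaxLeftIdeal (M j) := by
    intro j
    refine ⟨hMleft j, ?_, ?_⟩
    · intro htop
      have h1 : (1 : A) ∈ M j := htop ▸ Submodule.mem_top
      rw [hmemM, map_one, one_mul] at h1
      have h2 := congrFun (congrFun h1 j) j
      simp [hE] at h2
    · intro J hJ hMJ
      obtain ⟨x, hxJ, hxM⟩ := SetLike.exists_of_lt hMJ
      rw [hmemM] at hxM
      have hex : ∃ k : Fin n, π x k j ≠ 0 := by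
        by_contra hc
        push_neg at hc
        apply hxM
        ext p q
        rcases eq_or_ne q j with rfl | hq
        · simp [hE, hc p]
        · simp [hE, hq]
      obtain ⟨k, hk⟩ := hex
      obtain ⟨u, hu⟩ := hsurj ((π x k j)⁻¹ • Matrix.single j k 1)
      have hvJ : u * x ∈ J := hJ u x hxJ
      have hvE : π (u * x) * E j = E j := by
        rw [map_mul, hu, smul_mul_assoc, smul_mul_assoc, hE]
        rw [std_mul_mul_std' j k (π x), Matrix.smul_single, smul_eq_mul,
          inv_mul_cancel₀ hk]
      rw [eq_top_iff]
      intro a _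
      have h1 : a - a * (u * x) ∈ M j := by
        rw [hmemM, map_sub, sub_mul, map_mul, mul_assoc, hvE, sub_self]
      have h2 : a = (a - a * (u * x)) + a * (u * x) := by abel
      rw [h2]
      exact J.add_mem (hMJ.le h1) (hJ a _ hvJ)
  choose S hSsub hSgen using fun j => hmax (M j) (hMmax j) (hLM j)
  set z : A := 1 - ∑ j, e j with hz
  have hπz : π z = 0 := by
    rw [hz, map_sub, map_one, map_sum]
    simp only [he]
    rw [hE]
    rw [sum_stdBasisMatrix_eq_one' n, sub_self]
  have hzL : z ∈ L := (hker z).mp hπz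
  set G : Finset A := (Finset.univ.biUnion fun j => (S j).image (· * e j)) ∪ {z} with hG
  have hGsub : ↑G ⊆ (L : Set A) := by
    intro g hg
    simp only [hG, Finset.coe_union, Finset.coe_biUnion, Finset.coe_image,
      Finset.coe_singleton, Set.mem_union, Set.mem_iUnion, Set.mem_image,
      Set.mem_singleton_iff, Finset.coe_univ, Set.mem_univ] at hg
    rcases hg with ⟨j, _, s, hs, rfl⟩ | rfl
    · have hsM : s ∈ M j := hSsub j hs
      rw [hmemM] at hsM
      have : π (s * e j) = 0 := by rw [map_mul, he, hsM]
      exact (hker _).mp this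
    · exact hzL
  refine ⟨G, hGsub, le_antisymm (leftIdealGen_le' hL hGsub) ?_⟩
  intro x hx
  have hgen := isLeftIdeal_leftIdealGen' (↑G : Set A)
  have hzG : z ∈ leftIdealGen (↑G : Set A) := by
    apply subset_leftIdealGen'
    simp [hG]
  have hxe : ∀ j, x * e j ∈ leftIdealGen (↑G : Set A) := by
    intro j
    have hcomap : M j ≤ Submodule.comap (LinearMap.mulRight ℂ (e j))
        (leftIdealGen (↑G : Set A)) := by
      rw [← hSgen j]
      apply leftIdealGen_le'
      · intro a y hy
        simp only [Submodule.mem_comap, LinearMap.mulRight_apply] at hy ⊢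
        rw [mul_assoc]
        exact hgen a _ hy
      · intro s hs
        simp only [SetLike.mem_coe, Submodule.mem_comap, LinearMap.mulRight_apply]
        apply subset_leftIdealGen'
        simp only [hG, Finset.coe_union, Finset.coe_biUnion, Finset.coe_image,
          Finset.coe_singleton, Set.mem_union, Set.mem_iUnion, Set.mem_image,
          Finset.coe_univ, Set.mem_univ]
        exact Or.inl ⟨j, trivial, s, hs, rfl⟩
    have := hcomap (hLM j hx)
    simpa using this
  have hxz : x * z ∈ leftIdealGen (↑G : Set A) := hgen x z hzG
  have hxx : x = (∑ j, x * e j) + x * z := by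
    rw [← Finset.mul_sum, hz, mul_sub, mul_one]
    abel
  rw [hxx]
  exact Submodule.add_mem _ (Submodule.sum_mem _ fun j _ => hxe j) hxz
end
end

section
/- Let A be a unital, infinite-dimensional algebra, and suppose some left ideal M of A that is maximal among non-finitely-generated left ideals has finite codimension in A. Then A has a maximal left ideal that is not finitely generated. -/
noncomputable section

section AuxProof
variable {A : Type*} [Ring A] [Algebra ℂ A]

/-- An `IsLeftIdeal` ℂ-submodule viewed as an `A`-submodule. -/
def toA (I : Submodule ℂ A) (hI : IsLeftIdeal I) : Submodule A A where
  carrier := I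
  add_mem' := fun ha hb => I.add_mem ha hb
  zero_mem' := I.zero_mem
  smul_mem' := fun a x hx => by simpa [smul_eq_mul] using hI a x hx

lemma mem_toA {I : Submodule ℂ A} {hI : IsLeftIdeal I} {x : A} :
    x ∈ toA I hI ↔ x ∈ I := Iff.rfl

lemma isLeftIdeal_restrictScalars (I : Submodule A A) :
    IsLeftIdeal (I.restrictScalars ℂ) := by
  intro a x hx
  simpa [smul_eq_mul] using I.smul_mem a (by simpa using hx)

lemma leftIdealGen_eq (S : Set A) :
    leftIdealGen S = (Submodule.span A S).restrictScalars ℂ := by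
  apply le_antisymm
  · exact sInf_le ⟨isLeftIdeal_restrictScalars _, Submodule.subset_span⟩
  · rintro x hx
    refine Submodule.mem_sInf.mpr ?_
    rintro I ⟨hI, hS⟩
    exact (Submodule.span_le (p := toA I hI)).mpr hS (by simpa using hx)

lemma isFG_restrictScalars_iff (I : Submodule A A) :
    IsFGLeftIdeal (I.restrictScalars ℂ) ↔ I.FG := by
  constructor
  · rintro ⟨S, hS, hgen⟩
    refine ⟨S, ?_⟩
    rw [leftIdealGen_eq] at hgen
    exact Submodule.restrictScalars_injective ℂ A A hgen
  · rintro ⟨S, hS⟩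
    refine ⟨S, ?_, ?_⟩
    · intro x hx
      simpa using (hS ▸ Submodule.subset_span hx : x ∈ I)
    · rw [leftIdealGen_eq, hS]


lemma fg_of_finite_codim (hmax : ∀ N : Submodule A A, IsCoatom N → N.FG) :
    ∀ n : ℕ, ∀ I : Submodule A A, FiniteDimensional ℂ (A ⧸ I) →
      Module.finrank ℂ (A ⧸ I) = n → I.FG := by
  intro n
  induction n using Nat.strong_induction_on with
  | _ n ih =>
    intro I hfin hrank
    by_cases hI : I = ⊤
    · subst hI
      exact Module.Finite.fg_top
    · have hnt : Nontrivial (A ⧸ I) :=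
        Submodule.Quotient.nontrivial_iff.mpr hI
      have hart : IsArtinian A (A ⧸ I) := isArtinian_of_tower ℂ inferInstance
      have hatomic : IsAtomic (Submodule A (A ⧸ I)) :=
        isAtomic_of_orderBot_wellFounded_lt hart.wf
      obtain hb | ⟨S, hS, -⟩ := hatomic.eq_bot_or_exists_atom_le (⊤ : Submodule A (A ⧸ I))
      · exact absurd hb top_ne_bot
      set J : Submodule A A := S.comap I.mkQ with hJ
      have hIJ : I ≤ J := by
        intro x hx
        simp [hJ, Submodule.mem_comap, (Submodule.Quotient.mk_eq_zero I).mpr hx]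
      have hmap : J.map I.mkQ = S := by
        rw [Submodule.map_comap_eq, Submodule.range_mkQ, top_inf_eq]
      have hne : I ≠ J := by
        intro h
        apply hS.1
        rw [← hmap, ← h]
        ext y
        simp only [Submodule.mem_map, Submodule.mem_bot]
        constructor
        · rintro ⟨x, hx, rfl⟩
          exact (Submodule.Quotient.mk_eq_zero I).mpr hx
        · rintro rfl
          exact ⟨0, I.zero_mem, rfl⟩
      obtain ⟨z, hzJ, hzI⟩ := SetLike.exists_of_lt (lt_of_le_of_ne hIJ hne)
      -- the quotient map A⧸I → A⧸J
      let g : (A ⧸ I) →ₗ[A] (A ⧸ J) := Submodule.mapQ I J LinearMap.id hIJ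
      have gsurj : Function.Surjective g := by
        intro y
        obtain ⟨x, rfl⟩ := Submodule.mkQ_surjective J y
        exact ⟨I.mkQ x, by simp [g, Submodule.mapQ_apply]⟩
      let f : (A ⧸ I) →ₗ[ℂ] (A ⧸ J) := g.restrictScalars ℂ
      have fsurj : Function.Surjective f := gsurj
      have hfinJ : FiniteDimensional ℂ (A ⧸ J) := Module.Finite.of_surjective f fsurj
      have hkerne : LinearMap.ker f ≠ ⊥ := by
        refine Submodule.ne_bot_iff _ |>.mpr ⟨I.mkQ z, ?_, ?_⟩
        · simp only [LinearMap.mem_ker]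
          show g (I.mkQ z) = 0
          simp [g, Submodule.mapQ_apply, Submodule.mkQ_apply,
            (Submodule.Quotient.mk_eq_zero J).mpr hzJ]
        · simpa [Submodule.mkQ_apply, Submodule.Quotient.mk_eq_zero] using hzI
      have hlt : Module.finrank ℂ (A ⧸ J) < n := by
        have h1 := LinearMap.finrank_range_add_finrank_ker f
        rw [LinearMap.range_eq_top.mpr fsurj, finrank_top, hrank] at h1
        have h2 : 0 < Module.finrank ℂ (LinearMap.ker f) := by
          rcases Nat.eq_zero_or_pos (Module.finrank ℂ (LinearMap.ker f)) with h | h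
          · exact absurd (Submodule.finrank_eq_zero.mp h) hkerne
          · exact h
        omega
      have hJfg : J.FG := ih _ hlt J hfinJ rfl
      -- S is simple
      have hsimple : IsSimpleModule A S := isSimpleModule_iff_isAtom.mpr hS
      -- find a maximal left ideal N with A⧸N ≃ S
      haveI := hsimple
      haveI : Nontrivial S := IsSimpleModule.nontrivial A S
      obtain ⟨s, hs⟩ := exists_ne (0 : S)
      let φ : A →ₗ[A] S := LinearMap.toSpanSingleton A S s
      have φsurj : Function.Surjective φ :=
        IsSimpleModule.toSpanSingleton_surjective A hs
      let e : (A ⧸ LinearMap.ker φ) ≃ₗ[A] S := φ.quotKerEquivOfSurjective φsurj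
      have hNco : IsCoatom (LinearMap.ker φ) := by
        rw [← isSimpleModule_iff_isCoatom]
        exact IsSimpleModule.congr e
      have hNfg : (LinearMap.ker φ).FG := hmax _ hNco
      haveI : Module.FinitePresentation A A := Module.finitePresentation_of_projective A A
      haveI hfpQ : Module.FinitePresentation A (A ⧸ LinearMap.ker φ) :=
        Module.finitePresentation_of_surjective (LinearMap.ker φ).mkQ
          (Submodule.mkQ_surjective _) (by rwa [Submodule.ker_mkQ])
      haveI hfpS : Module.FinitePresentation A S :=
        Module.finitePresentation_of_surjective e.toLinearMap e.surjective
          (by rw [LinearMap.ker_eq_bot.mpr e.injective]; exact Submodule.fg_bot)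
      -- the map J → S
      have hmem : ∀ x : J, I.mkQ x ∈ S := by
        intro x
        rw [← hmap]
        exact ⟨x, x.2, rfl⟩
      let ψ : J →ₗ[A] S := LinearMap.codRestrict S (I.mkQ.comp J.subtype) hmem
      have ψsurj : Function.Surjective ψ := by
        rintro ⟨y, hy⟩
        rw [← hmap] at hy
        obtain ⟨x, hxJ, hxy⟩ := hy
        exact ⟨⟨x, hxJ⟩, Subtype.ext (by exact hxy)⟩
      haveI : Module.Finite A J := Module.Finite.iff_fg.mpr hJfg
      have hkfg : (LinearMap.ker ψ).FG := Module.FinitePresentation.fg_ker ψ ψsurj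
      have hIeq : (LinearMap.ker ψ).map J.subtype = I := by
        ext x
        simp only [Submodule.mem_map, LinearMap.mem_ker]
        constructor
        · rintro ⟨⟨y, hyJ⟩, hk, rfl⟩
          have : I.mkQ y = 0 := congrArg Subtype.val hk
          simpa [Submodule.mkQ_apply, Submodule.Quotient.mk_eq_zero] using this
        · intro hx
          refine ⟨⟨x, hIJ hx⟩, Subtype.ext ?_, rfl⟩
          exact (Submodule.Quotient.mk_eq_zero I).mpr hx
      rw [← hIeq]
      exact hkfg.map _

end AuxProof

/-- Let `A` be a unital, infinite-dimensional algebra, and suppose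
some element of `𝔐∞(A)` has finite codimension in `A`. Then `A` has a maximal left
ideal that is not finitely generated. -/
theorem exists_nonFG_maximal_leftIdeal {A : Type*} [Ring A] [Algebra ℂ A]
    (hA : ¬ FiniteDimensional ℂ A)
    (M : Submodule ℂ A) (hM : IsMaxNonFG M) (hcodim : FiniteDimensional ℂ (A ⧸ M)) :
    ∃ N : Submodule ℂ A, IsMaxLeftIdeal N ∧ ¬ IsFGLeftIdeal N := by
  by_contra hcon
  push_neg at hcon
  have hM' : IsLeftIdeal M := hM.1
  set M' : Submodule A A := toA M hM' with hMdef
  have hres : M'.restrictScalars ℂ = M := by ext x; rfl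
  have hmax : ∀ N : Submodule A A, IsCoatom N → N.FG := by
    intro N hN
    rw [← isFG_restrictScalars_iff]
    apply hcon
    refine ⟨isLeftIdeal_restrictScalars N, ?_, ?_⟩
    · intro h
      apply hN.1
      rw [Submodule.eq_top_iff']
      intro x
      have : x ∈ N.restrictScalars ℂ := by rw [h]; trivial
      simpa using this
    · intro Jc hJc hlt
      have hle : N ≤ toA Jc hJc := fun x hx => hlt.le hx
      have hne2 : N ≠ toA Jc hJc := by
        intro h
        exact hlt.ne (by rw [← hres] at *; exact congrArg (Submodule.restrictScalars ℂ) h ▸ rfl)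
      have htop := hN.2 _ (lt_of_le_of_ne hle hne2)
      rw [Submodule.eq_top_iff']
      intro x
      exact (htop ▸ Submodule.mem_top : x ∈ toA Jc hJc)
  have hfin : FiniteDimensional ℂ (A ⧸ M') := by
    rw [← hres] at hcodim
    exact Module.Finite.equiv (Submodule.Quotient.restrictScalarsEquiv ℂ M')
  have hfg : M'.FG := fg_of_finite_codim hmax _ M' hfin rfl
  exact hM.2.1 (hres ▸ (isFG_restrictScalars_iff M').mpr hfg)
end
end
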